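/- arXiv:2002.04190 — 2 statements merged into one kernel-verified Lean document; each statement's English description precedes it below -/
import Mathlib

section
/- Let (a_n) be an arithmetic sequence, x ∈ 𝕋 with canonical representation x = Σ c_n/a_n, and B ⊆ ℕ with positive upper natural density such that lim_{n ∈ B} a_{n-1}x = 0 in 𝕋. If B is q-bounded and d(B \ supp(x)) = 0, then c_n = q_n - 1 for all n in B outside a set of natural density zero (i.e., B ⊆^d supp_q(x)), and there exists B' ⊆ B with d(B \ B') = 0 such that lim_{n ∈ B'} {a_{n-1}x} = 1 in ℝ. -/
open Filter Topology Set

/-- Upper natural density of a set of naturals. -/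
noncomputable def upperDensity (A : Set ℕ) : ℝ :=
  Filter.limsup (fun n => (Nat.card ↥(A ∩ Set.Iio n) : ℝ) / n) Filter.atTop

/-- `A` has natural density `δ`. -/
def HasDensity (A : Set ℕ) (δ : ℝ) : Prop :=
  Filter.Tendsto (fun n => (Nat.card ↥(A ∩ Set.Iio n) : ℝ) / n) Filter.atTop (nhds δ)

/-- Statistical convergence of a real sequence. -/
def StatTendsto (x : ℕ → ℝ) (ξ : ℝ) : Prop :=
  ∀ ε : ℝ, 0 < ε → HasDensity {n | ε ≤ |x n - ξ|} 0

/-- An arithmetic sequence: `a 0 = 1 < a 1 < a 2 < ⋯` and `a n ∣ a (n+1)`. -/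
def IsArithmeticSeq (a : ℕ → ℕ) : Prop :=
  a 0 = 1 ∧ StrictMono a ∧ ∀ n, a n ∣ a (n + 1)

/-- The ratio `q n = a n / a (n-1)` as a real number. -/
noncomputable def qr (a : ℕ → ℕ) (n : ℕ) : ℝ := (a n : ℝ) / (a (n - 1) : ℝ)

/-- `(c n)` is a canonical representation sequence w.r.t. `(a n)`:
`0 ≤ c n < q n` and `c n < q n - 1` for infinitely many `n`. -/
def IsCanonicalRep (a : ℕ → ℕ) (c : ℕ → ℕ) : Prop :=
  c 0 = 0 ∧ (∀ n, 1 ≤ n → c n < a n / a (n - 1)) ∧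
    (∀ N, ∃ n, N ≤ n ∧ 1 ≤ n ∧ c n + 1 < a n / a (n - 1))

/-- Support of (the canonical representation of) `x`. -/
def suppRep (c : ℕ → ℕ) : Set ℕ := {n | 1 ≤ n ∧ c n ≠ 0}

/-- `supp_q(x) = {n : c n = q n - 1}`. -/
def suppqRep (a c : ℕ → ℕ) : Set ℕ := {n | 1 ≤ n ∧ c n + 1 = a n / a (n - 1)}

/-- A set `S ⊆ ℕ` is `q`-bounded if `(q n)` is bounded on `S`. -/
def QBounded (a : ℕ → ℕ) (S : Set ℕ) : Prop := ∃ M, ∀ n ∈ S, a n / a (n - 1) ≤ M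

/-- A set `S ⊆ ℕ` is `q`-divergent if `q n → ∞` along `n ∈ S`. -/
def QDivergent (a : ℕ → ℕ) (S : Set ℕ) : Prop :=
  Filter.Tendsto (fun n => a n / a (n - 1)) (Filter.atTop ⊓ Filter.principal S) Filter.atTop

/-- Statistical convergence in a topological space, via neighborhoods. -/
def StatNhdTendsto {α : Type*} [TopologicalSpace α] (y : ℕ → α) (ℓ : α) : Prop :=
  ∀ U ∈ nhds ℓ, HasDensity {n | y n ∉ U} 0

lemma count_nonneg (A : Set ℕ) (n : ℕ) : 0 ≤ (Nat.card ↥(A ∩ Set.Iio n) : ℝ) / n := by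
  positivity

lemma hasDensity_zero_mono {A C : Set ℕ} (h : A ⊆ C) (hC : HasDensity C 0) :
    HasDensity A 0 := by
  refine tendsto_of_tendsto_of_tendsto_of_le_of_le tendsto_const_nhds hC
    (fun n => count_nonneg A n) (fun n => ?_)
  gcongr
  rw [Nat.card_coe_set_eq, Nat.card_coe_set_eq]
  exact_mod_cast Set.ncard_le_ncard (Set.inter_subset_inter_left _ h)
    ((Set.finite_Iio n).inter_of_right _)

lemma hasDensity_zero_union {A C : Set ℕ} (hA : HasDensity A 0) (hC : HasDensity C 0) :
    HasDensity (A ∪ C) 0 := by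
  have h2 := hA.add hC
  rw [add_zero] at h2
  refine tendsto_of_tendsto_of_tendsto_of_le_of_le tendsto_const_nhds h2
    (fun n => count_nonneg _ n) (fun n => ?_)
  rw [← add_div]
  gcongr
  rw [Nat.card_coe_set_eq, Nat.card_coe_set_eq, Nat.card_coe_set_eq]
  have e : (A ∪ C) ∩ Set.Iio n = (A ∩ Set.Iio n) ∪ (C ∩ Set.Iio n) :=
    Set.union_inter_distrib_right _ _ _
  rw [e]
  exact le_of_le_of_eq ((Nat.cast_le (α := ℝ)).mpr (Set.ncard_union_le (A ∩ Set.Iio n) (C ∩ Set.Iio n))) (Nat.cast_add _ _)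

lemma hasDensity_zero_finite {A : Set ℕ} (hA : A.Finite) : HasDensity A 0 := by
  refine tendsto_of_tendsto_of_tendsto_of_le_of_le tendsto_const_nhds
    (tendsto_const_div_atTop_nhds_zero_nat (A.ncard : ℝ)) (fun n => count_nonneg A n)
    (fun n => ?_)
  gcongr
  rw [Nat.card_coe_set_eq]
  exact_mod_cast Set.ncard_le_ncard (Set.inter_subset_left) hA

variable {a c : ℕ → ℕ}

lemma apos (ha : IsArithmeticSeq a) (n : ℕ) : 0 < a n := by
  have h0 : a 0 = 1 := ha.1
  have := ha.2.1.monotone (Nat.zero_le n)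
  omega

lemma advd (ha : IsArithmeticSeq a) {i j : ℕ} (h : i ≤ j) : a i ∣ a j := by
  induction j with
  | zero => simpa [Nat.le_zero.mp h]
  | succ k ih =>
    rcases Nat.lt_or_ge i (k+1) with h' | h'
    · exact (ih (Nat.lt_succ_iff.mp h')).trans (ha.2.2 k)
    · have : i = k + 1 := le_antisymm h h'
      simp [this]

lemma atwo (ha : IsArithmeticSeq a) (n : ℕ) : 2 * a n ≤ a (n + 1) := by
  obtain ⟨k, hk⟩ := ha.2.2 n
  have hlt : a n < a (n + 1) := ha.2.1 (Nat.lt_succ_self n)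
  have hk2 : 2 ≤ k := by
    by_contra hcon
    interval_cases k <;> omega
  calc 2 * a n ≤ a n * k := by nlinarith [apos ha n]
  _ = a (n+1) := hk.symm

lemma apow (ha : IsArithmeticSeq a) (n : ℕ) : 2 ^ n ≤ a n := by
  induction n with
  | zero => simp [ha.1]
  | succ k ih => calc 2 ^ (k+1) = 2 * 2 ^ k := by ring
                 _ ≤ 2 * a k := by omega
                 _ ≤ a (k+1) := atwo ha k

/-- key bound with slack k -/
lemma f_le_gen (ha : IsArithmeticSeq a) {i k : ℕ} (hi : 1 ≤ i)
    (h : c i + k ≤ a i / a (i - 1)) :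
    (c i : ℝ) / a i ≤ 1 / a (i - 1) - k / a i := by
  have hd : a (i - 1) ∣ a i := by
    have : i - 1 + 1 = i := Nat.succ_pred_eq_of_pos hi
    exact this ▸ advd ha (by omega)
  have hnat : (c i + k) * a (i - 1) ≤ a i := by
    calc (c i + k) * a (i - 1) ≤ a i / a (i - 1) * a (i - 1) := by
          exact Nat.mul_le_mul_right _ h
    _ = a i := Nat.div_mul_cancel hd
  have h1 : (0:ℝ) < a (i - 1) := by exact_mod_cast apos ha (i-1)
  have h2 : (0:ℝ) < a i := by exact_mod_cast apos ha i
  have hr : ((c i : ℝ) + k) * a (i - 1) ≤ a i := by exact_mod_cast hnat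
  rw [div_sub_div _ _ (ne_of_gt h1) (ne_of_gt h2), div_le_div_iff₀ h2 (by positivity)]
  nlinarith

/-- summability of the digit series -/
lemma f_summable (ha : IsArithmeticSeq a) (hc : IsCanonicalRep a c) :
    Summable (fun i => (c i : ℝ) / a i) := by
  have hgeo : Summable (fun i : ℕ => (2:ℝ) * (1/2)^i) := summable_geometric_two.mul_left 2
  refine Summable.of_nonneg_of_le (fun i => by positivity) (fun i => ?_) hgeo
  rcases Nat.eq_zero_or_pos i with h0 | h1
  · simp [h0, hc.1]
  · have := f_le_gen (c := c) ha h1 (k := 1) (hc.2.1 i h1)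
    have h2 : (0:ℝ) < a i := by exact_mod_cast apos ha i
    have h3 : (2:ℝ)^(i-1) ≤ a (i-1) := by exact_mod_cast apow ha (i-1)
    have h4 : (0:ℝ) < 2^(i-1) := by positivity
    have h5 : 1 / (a (i-1) : ℝ) ≤ 1 / 2^(i-1) := by
      apply one_div_le_one_div_of_le h4 h3
    have h7 : (2:ℝ)^i = 2 * 2^(i-1) := by
      rw [← pow_succ']; congr 1; omega
    have h6 : (1:ℝ) / 2^(i-1) = 2 * (1/2)^i := by
      rw [div_pow, one_pow, h7]; field_simp
    calc (c i : ℝ) / a i ≤ 1 / a (i-1) - 1 / a i := by simpa using this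
    _ ≤ 1 / a (i-1) := by
          have h8 : (0:ℝ) ≤ 1 / (a i : ℝ) := by positivity
          linarith
    _ ≤ 2 * (1/2)^i := h6 ▸ h5

lemma partial_le (ha : IsArithmeticSeq a) (hc : IsCanonicalRep a c) (m k : ℕ) :
    ∑ i ∈ Finset.range k, (c (i + (m+1)) : ℝ) / a (i + (m+1)) ≤
      1 / a m - 1 / a (k + m) := by
  induction k with
  | zero => simp
  | succ k ih =>
    rw [Finset.sum_range_succ]
    have hstep := f_le_gen (c := c) ha (i := k + (m+1)) (k := 1) (by omega)
      (by simpa using hc.2.1 (k + (m+1)) (by omega))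
    have e1 : k + (m+1) - 1 = k + m := by omega
    rw [e1] at hstep
    have e2 : k + 1 + m = k + (m+1) := by omega
    rw [e2]
    push_cast at hstep ⊢
    linarith

lemma tail_summable (ha : IsArithmeticSeq a) (hc : IsCanonicalRep a c) (n : ℕ) :
    Summable (fun i => (c (i + n) : ℝ) / a (i + n)) :=
  (summable_nat_add_iff n).mpr (f_summable ha hc)

lemma tail_le (ha : IsArithmeticSeq a) (hc : IsCanonicalRep a c) (m : ℕ) :
    (∑' i, (c (i + (m+1)) : ℝ) / a (i + (m+1))) ≤ 1 / a m := by
  refine le_of_tendsto (tail_summable ha hc (m+1)).hasSum.tendsto_sum_nat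
    (Filter.Eventually.of_forall fun k => ?_)
  refine le_trans (partial_le ha hc m k) ?_
  have : (0:ℝ) ≤ 1 / a (k + m) := by positivity
  linarith

lemma tail_nonneg (m : ℕ) : (0:ℝ) ≤ ∑' i, (c (i + m) : ℝ) / a (i + m) :=
  tsum_nonneg (fun i => by positivity)

lemma tail_ge (ha : IsArithmeticSeq a) (hc : IsCanonicalRep a c) (m : ℕ) :
    (c m : ℝ) / a m ≤ ∑' i, (c (i + m) : ℝ) / a (i + m) := by
  simpa using Summable.le_tsum (tail_summable ha hc m) 0 (fun j _ => by positivity)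

lemma tail_lt (ha : IsArithmeticSeq a) (hc : IsCanonicalRep a c) (m : ℕ) :
    (∑' i, (c (i + (m+1)) : ℝ) / a (i + (m+1))) < 1 / a m := by
  obtain ⟨p, hp1, hp2, hp3⟩ := hc.2.2 (m+1)
  set j := p - (m+1) with hj
  have hpj : j + (m+1) = p := by omega
  have hsplit := Summable.sum_add_tsum_nat_add (f := fun i => (c (i + (m+1)) : ℝ) / a (i + (m+1)))
    (j+1) (tail_summable ha hc (m+1))
  have h1 : ∑ i ∈ Finset.range j, (c (i + (m+1)) : ℝ) / a (i + (m+1)) ≤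
      1 / a m - 1 / a (p - 1) := by
    have := partial_le ha hc m j
    have e : j + m = p - 1 := by omega
    rwa [e] at this
  have h2 : (c (j + (m+1)) : ℝ) / a (j + (m+1)) ≤ 1 / a (p-1) - 2 / a p := by
    rw [hpj]
    exact f_le_gen ha hp2 (k := 2) (by omega)
  have h3 : (∑' i, (c (i + (j+1) + (m+1)) : ℝ) / a (i + (j+1) + (m+1))) ≤ 1 / a p := by
    have e : ∀ i, i + (j+1) + (m+1) = i + (p+1) := fun i => by omega
    calc (∑' i, (c (i + (j+1) + (m+1)) : ℝ) / a (i + (j+1) + (m+1)))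
        = ∑' i, (c (i + (p+1)) : ℝ) / a (i + (p+1)) := tsum_congr (fun i => by rw [e i])
      _ ≤ 1 / a p := tail_le ha hc p
  have h4 : ∑ i ∈ Finset.range (j+1), (c (i + (m+1)) : ℝ) / a (i + (m+1)) ≤
      1 / a m - 2 / a p := by
    rw [Finset.sum_range_succ]
    linarith
  have h5 : (0:ℝ) < 1 / a p := by
    have : (0:ℝ) < a p := by exact_mod_cast apos ha p
    positivity
  beta_reduce at hsplit
  calc (∑' i, (c (i + (m+1)) : ℝ) / a (i + (m+1)))
      = ∑ i ∈ Finset.range (j+1), (c (i + (m+1)) : ℝ) / a (i + (m+1)) +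
        ∑' i, (c (i + (j+1) + (m+1)) : ℝ) / a (i + (j+1) + (m+1)) := hsplit.symm
    _ ≤ (1 / a m - 2 / a p) + 1 / a p := add_le_add h4 h3
    _ = 1 / a m - 1 / a p := by ring
    _ < 1 / a m := by linarith

lemma int_part (ha : IsArithmeticSeq a) (m : ℕ) :
    ((∑ i ∈ Finset.range (m+1), c i * (a m / a i) : ℕ) : ℝ) =
      (a m : ℝ) * ∑ i ∈ Finset.range (m+1), (c i : ℝ) / a i := by
  rw [Finset.mul_sum, Nat.cast_sum]
  refine Finset.sum_congr rfl (fun i hi => ?_)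
  have hd : a i ∣ a m := advd ha (Nat.lt_succ_iff.mp (Finset.mem_range.mp hi))
  have h0 : (a i : ℝ) ≠ 0 := by exact_mod_cast (apos ha i).ne'
  rw [Nat.cast_mul, Nat.cast_div hd h0]
  field_simp

lemma decomp (ha : IsArithmeticSeq a) (hc : IsCanonicalRep a c) (m : ℕ) :
    ∃ N : ℕ, (a m : ℝ) * (∑' i, (c i : ℝ) / a i)
      = N + (a m : ℝ) * ∑' i, (c (i + (m+1)) : ℝ) / a (i + (m+1)) := by
  refine ⟨∑ i ∈ Finset.range (m+1), c i * (a m / a i), ?_⟩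
  have hsplit := Summable.sum_add_tsum_nat_add (f := fun i => (c i : ℝ) / a i) (m+1)
    (f_summable ha hc)
  rw [← hsplit, mul_add, int_part ha m]

lemma Tm_nonneg (m : ℕ) : (0:ℝ) ≤ (a m : ℝ) * ∑' i, (c (i + (m+1)) : ℝ) / a (i + (m+1)) :=
  mul_nonneg (Nat.cast_nonneg _) (tail_nonneg _)

lemma Tm_lt_one (ha : IsArithmeticSeq a) (hc : IsCanonicalRep a c) (m : ℕ) :
    (a m : ℝ) * (∑' i, (c (i + (m+1)) : ℝ) / a (i + (m+1))) < 1 := by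
  have h := tail_lt ha hc m
  have hpos : (0:ℝ) < a m := by exact_mod_cast apos ha m
  calc (a m : ℝ) * (∑' i, (c (i + (m+1)) : ℝ) / a (i + (m+1)))
      < (a m : ℝ) * (1 / a m) := by exact mul_lt_mul_of_pos_left h hpos
    _ = 1 := by field_simp

lemma fract_eq (ha : IsArithmeticSeq a) (hc : IsCanonicalRep a c) (m : ℕ) :
    Int.fract ((a m : ℝ) * ∑' i, (c i : ℝ) / a i)
      = (a m : ℝ) * ∑' i, (c (i + (m+1)) : ℝ) / a (i + (m+1)) := by
  obtain ⟨N, hN⟩ := decomp ha hc m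
  rw [hN, add_comm, Int.fract_add_natCast,
    Int.fract_eq_self.mpr ⟨Tm_nonneg m, Tm_lt_one ha hc m⟩]

lemma circle_eq (ha : IsArithmeticSeq a) (hc : IsCanonicalRep a c) (m : ℕ) :
    (a m) • (((∑' i, (c i : ℝ) / a i : ℝ)) : AddCircle (1:ℝ))
      = (((a m : ℝ) * ∑' i, (c (i + (m+1)) : ℝ) / a (i + (m+1)) : ℝ) : AddCircle (1:ℝ)) := by
  rw [← AddCircle.coe_nsmul, nsmul_eq_mul]
  obtain ⟨N, hN⟩ := decomp ha hc m
  rw [hN]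
  have : (((N : ℝ)) : AddCircle (1:ℝ)) = 0 :=
    (AddCircle.coe_eq_zero_iff (1:ℝ)).mpr ⟨N, by simp⟩
  calc (((N : ℝ) + (a m : ℝ) * ∑' i, (c (i + (m+1)) : ℝ) / a (i + (m+1)) : ℝ) : AddCircle (1:ℝ))
      = (((N : ℝ)) : AddCircle (1:ℝ))
        + (((a m : ℝ) * ∑' i, (c (i + (m+1)) : ℝ) / a (i + (m+1)) : ℝ) : AddCircle (1:ℝ)) := rfl
    _ = _ := by rw [this, zero_add]

lemma round_arg {t δ : ℝ} (h1 : 2*δ ≤ t) (h2 : t < 1) (h4 : δ ≤ 1/4)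
    (h3 : |t - round t| < δ) : 1 - t < δ := by
  have hδ0 : 0 < δ := lt_of_le_of_lt (abs_nonneg _) h3
  have hk := abs_lt.mp h3
  set k := round t with hkdef
  have hk1 : k = 1 := by
    rcases lt_trichotomy k 1 with h | h | h
    · exfalso
      have : (k:ℝ) ≤ 0 := by exact_mod_cast Int.lt_iff_add_one_le.mp h |> (by omega : k + 1 ≤ 1 → k ≤ 0)
      linarith [hk.2]
    · exact h
    · exfalso
      have : (2:ℝ) ≤ (k:ℝ) := by exact_mod_cast h
      linarith [hk.1]
  rw [hk1] at hk
  push_cast at hk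
  linarith [hk.1]


/-- Lemma 1.8 (i): if `B` has positive upper density, `a_{n-1} x → 0` along `B`,
`B` is `q`-bounded and `B ⊆^d supp(x)`, then `B ⊆^d supp_q(x)` and the
fractional parts `{a_{n-1} x}` converge to `1` in `ℝ` along some `B' ⊆ B`
with `d(B \ B') = 0`. -/
theorem lemma_nec_i (a c : ℕ → ℕ) (ha : IsArithmeticSeq a) (hc : IsCanonicalRep a c)
    (x : AddCircle (1 : ℝ))
    (hx : x = ((∑' n, (c n : ℝ) / (a n : ℝ) : ℝ) : AddCircle (1 : ℝ)))
    (B : Set ℕ) (hB : 0 < upperDensity B)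
    (hlim : Filter.Tendsto (fun n => a (n - 1) • x)
      (Filter.atTop ⊓ Filter.principal B) (nhds 0))
    (hqb : QBounded a B) (hd : HasDensity (B \ suppRep c) 0) :
    HasDensity (B \ suppqRep a c) 0 ∧
      ∃ B' ⊆ B, HasDensity (B \ B') 0 ∧
        Filter.Tendsto
          (fun n => Int.fract ((a (n - 1) : ℝ) * ∑' i, (c i : ℝ) / (a i : ℝ)))
          (Filter.atTop ⊓ Filter.principal B') (nhds 1) := by
  subst hx
  obtain ⟨M, hM⟩ := hqb
  set Mr : ℝ := ((max M 2 : ℕ) : ℝ) with hMrdef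
  have hMr2 : (2:ℝ) ≤ Mr := by
    rw [hMrdef]; exact_mod_cast le_max_right M 2
  have hMr0 : (0:ℝ) < Mr := by linarith
  set δ : ℝ := 1/(2*Mr) with hδdef
  have hδ0 : 0 < δ := by positivity
  have hδ4 : δ ≤ 1/4 := by
    rw [hδdef, div_le_div_iff₀ (by linarith) (by norm_num)]
    linarith
  have h2δ : 2*δ = 1/Mr := by rw [hδdef]; field_simp
  have hnorm : Filter.Tendsto
      (fun n => ‖a (n-1) • (((∑' i, (c i : ℝ) / a i : ℝ)) : AddCircle (1:ℝ))‖)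
      (Filter.atTop ⊓ Filter.principal B) (nhds 0) := by
    rw [← tendsto_zero_iff_norm_tendsto_zero]
    exact hlim
  -- lower bound on the ratio a m / a (m+1) for m+1 ∈ B
  have hbd : ∀ m : ℕ, (m+1) ∈ B → 1/Mr ≤ (a m : ℝ) / a (m+1) := by
    intro m hm
    have hq : a (m+1) / a m ≤ M := hM (m+1) hm
    have hdv : a m ∣ a (m+1) := ha.2.2 m
    have h1 : a (m+1) ≤ max M 2 * a m := by
      calc a (m+1) = a (m+1) / a m * a m := (Nat.div_mul_cancel hdv).symm
        _ ≤ max M 2 * a m := Nat.mul_le_mul_right _ (le_trans hq (le_max_left M 2))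
    have ham : (0:ℝ) < a m := by exact_mod_cast apos ha m
    have ham1 : (0:ℝ) < a (m+1) := by exact_mod_cast apos ha (m+1)
    rw [div_le_div_iff₀ hMr0 ham1]
    have h2 : (a (m+1) : ℝ) ≤ Mr * a m := by rw [hMrdef]; exact_mod_cast h1
    nlinarith
  -- lower bound on T m when the digit is nonzero
  have hTlow : ∀ m : ℕ, (m+1) ∈ B → c (m+1) ≠ 0 →
      2*δ ≤ (a m : ℝ) * ∑' i, (c (i + (m+1)) : ℝ) / a (i + (m+1)) := by
    intro m hm hc0
    have h1 : (1:ℝ) ≤ c (m+1) := by exact_mod_cast Nat.one_le_iff_ne_zero.mpr hc0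
    have ham : (0:ℝ) ≤ a m := Nat.cast_nonneg _
    have ham1 : (0:ℝ) < a (m+1) := by exact_mod_cast apos ha (m+1)
    have hle2 : (1:ℝ)/a (m+1) ≤ (c (m+1):ℝ) / a (m+1) := by gcongr
    have h3 := tail_ge ha hc (m+1)
    have h4 : (a m : ℝ) * ((c (m+1):ℝ)/a (m+1)) ≤
        (a m : ℝ) * ∑' i, (c (i + (m+1)) : ℝ) / a (i + (m+1)) :=
      mul_le_mul_of_nonneg_left h3 ham
    have h5 : (a m:ℝ) * ((1:ℝ)/a (m+1)) ≤ (a m:ℝ) * ((c (m+1):ℝ)/a (m+1)) :=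
      mul_le_mul_of_nonneg_left hle2 ham
    have h6 : (a m:ℝ) * ((1:ℝ)/a (m+1)) = (a m:ℝ) / a (m+1) := by ring
    have h7 := hbd m hm
    linarith
  -- upper bound on T m when the digit is not maximal
  have hThigh : ∀ m : ℕ, (m+1) ∈ B → c (m+1) + 1 ≠ a (m+1) / a m →
      (a m : ℝ) * ∑' i, (c (i + (m+1)) : ℝ) / a (i + (m+1)) ≤ 1 - 2*δ := by
    intro m hm hne
    have hstep : c (m+1) < a (m+1) / a ((m+1) - 1) := hc.2.1 (m+1) (by omega)
    have hred : (m+1) - 1 = m := rfl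
    rw [hred] at hstep
    have hlt2 : c (m+1) + 2 ≤ a (m+1) / a m := by omega
    have hf := f_le_gen (c := c) ha (i := m+1) (k := 2) (by omega) (by rwa [hred])
    rw [hred] at hf
    push_cast at hf
    have hz := Summable.tsum_eq_zero_add (tail_summable ha hc (m+1))
    beta_reduce at hz
    have hz0 : (0:ℕ) + (m+1) = m+1 := by omega
    rw [hz0] at hz
    have hsh : (∑' i, (c (i + 1 + (m+1)):ℝ)/a (i + 1 + (m+1)))
        = ∑' i, (c (i + (m+2)):ℝ)/a (i + (m+2)) :=
      tsum_congr (fun i => by rw [show i + 1 + (m+1) = i + (m+2) from by omega])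
    rw [hsh] at hz
    have htl := tail_le ha hc (m+1)
    rw [show m + 1 + 1 = m + 2 from by omega] at htl
    have ham : (0:ℝ) < a m := by exact_mod_cast apos ha m
    have ham1 : (0:ℝ) < a (m+1) := by exact_mod_cast apos ha (m+1)
    have hTub : (∑' i, (c (i + (m+1)) : ℝ) / a (i + (m+1)))
        ≤ 1/a m - 1/a (m+1) := by
      calc (∑' i, (c (i + (m+1)) : ℝ) / a (i + (m+1)))
          = (c (m+1):ℝ)/a (m+1) + ∑' i, (c (i + (m+2)):ℝ)/a (i + (m+2)) := hz
        _ ≤ (1/a m - 2/a (m+1)) + 1/a (m+1) := add_le_add hf htl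
        _ = 1/a m - 1/a (m+1) := by ring
    have h8 : (a m : ℝ) * ∑' i, (c (i + (m+1)) : ℝ) / a (i + (m+1))
        ≤ (a m : ℝ) * (1/a m - 1/a (m+1)) := mul_le_mul_of_nonneg_left hTub ham.le
    have h9 : (a m : ℝ) * (1/a m - 1/a (m+1)) = 1 - a m / a (m+1) := by
      field_simp
    have h7 := hbd m hm
    linarith
  -- extract the eventual bound from the limit
  have hev : ∀ᶠ n in Filter.atTop ⊓ Filter.principal B,
      ‖a (n-1) • (((∑' i, (c i : ℝ) / a i : ℝ)) : AddCircle (1:ℝ))‖ < δ :=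
    hnorm.eventually_lt_const hδ0
  obtain ⟨N, hN⟩ := eventually_atTop.mp (eventually_inf_principal.mp hev)
  have key : ∀ n, N ≤ n → 1 ≤ n → n ∈ B → c n ≠ 0 → n ∈ suppqRep a c := by
    intro n hnN hn1 hnB hcn
    obtain ⟨m, rfl⟩ : ∃ m, n = m + 1 := ⟨n-1, by omega⟩
    have hnval := hN (m+1) hnN hnB
    rw [show (m+1) - 1 = m from rfl, circle_eq ha hc m, AddCircle.norm_eq,
      inv_one, one_mul, mul_one] at hnval
    have h2T := hTlow m hnB hcn
    have hlt1 := Tm_lt_one ha hc m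
    have h1T := round_arg h2T hlt1 hδ4 hnval
    refine ⟨by omega, ?_⟩
    show c (m+1) + 1 = a (m+1) / a ((m+1) - 1)
    rw [show (m+1) - 1 = m from rfl]
    by_contra hne
    have := hThigh m hnB hne
    linarith
  constructor
  · have hsub : B \ suppqRep a c ⊆ (B \ suppRep c) ∪ Set.Iio (max N 1) := by
      intro n hn
      by_cases hlt : n < max N 1
      · exact Or.inr hlt
      · push_neg at hlt
        exact Or.inl ⟨hn.1, fun hs => hn.2
          (key n (le_trans (le_max_left _ _) hlt) (le_trans (le_max_right _ _) hlt)
            hn.1 hs.2)⟩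
    exact hasDensity_zero_mono hsub
      (hasDensity_zero_union hd (hasDensity_zero_finite (Set.finite_Iio _)))
  · refine ⟨B ∩ suppRep c, Set.inter_subset_left, ?_, ?_⟩
    · have heq : B \ (B ∩ suppRep c) = B \ suppRep c := by
        ext n; simp only [Set.mem_diff, Set.mem_inter_iff]; tauto
      rw [heq]; exact hd
    · rw [Metric.tendsto_nhds]
      intro ε hε
      set δ' := min δ ε with hδ'def
      have hδ'0 : 0 < δ' := lt_min hδ0 hε
      have hδ'δ : δ' ≤ δ := min_le_left _ _
      have hδ'ε : δ' ≤ ε := min_le_right _ _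
      have hle : Filter.atTop ⊓ Filter.principal (B ∩ suppRep c)
          ≤ Filter.atTop ⊓ Filter.principal B :=
        inf_le_inf_left _ (principal_mono.mpr Set.inter_subset_left)
      have hev' : ∀ᶠ n in Filter.atTop ⊓ Filter.principal (B ∩ suppRep c),
          ‖a (n-1) • (((∑' i, (c i : ℝ) / a i : ℝ)) : AddCircle (1:ℝ))‖ < δ' :=
        (hnorm.mono_left hle).eventually_lt_const hδ'0
      have hmem : ∀ᶠ n in Filter.atTop ⊓ Filter.principal (B ∩ suppRep c),
          n ∈ B ∩ suppRep c :=
        eventually_inf_principal.mpr (Filter.Eventually.of_forall (fun n h => h))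
      have hge : ∀ᶠ n in Filter.atTop ⊓ Filter.principal (B ∩ suppRep c), 1 ≤ n :=
        (eventually_ge_atTop 1).filter_mono inf_le_left
      filter_upwards [hev', hmem, hge] with n h1 h2 h3
      obtain ⟨m, rfl⟩ : ∃ m, n = m + 1 := ⟨n-1, by omega⟩
      rw [show (m+1) - 1 = m from rfl] at h1 ⊢
      rw [circle_eq ha hc m, AddCircle.norm_eq, inv_one, one_mul, mul_one] at h1
      have h2T : 2*δ' ≤ (a m : ℝ) * ∑' i, (c (i + (m+1)) : ℝ) / a (i + (m+1)) :=
        le_trans (by linarith) (hTlow m h2.1 h2.2.2)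
      have hlt1 := Tm_lt_one ha hc m
      have h1T := round_arg h2T hlt1 (le_trans hδ'δ hδ4) h1
      rw [fract_eq ha hc m, Real.dist_eq,
        abs_of_nonpos (by linarith)]
      linarith
end

section
/- Let (a_n) be an arithmetic sequence with ratios q_n = a_n/a_{n-1}, and let A ⊆ ℕ have positive upper natural density with (q_n)_{n∈A} unbounded. If there is no q-bounded subset A' ⊆ A with positive upper density, then there exists B ⊆ A with d(A \ B) = 0 such that lim_{n ∈ B} q_n = ∞. -/
open Filter Topology Set

private lemma densFun_nonneg (S : Set ℕ) (n : ℕ) :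
    0 ≤ (Nat.card ↥(S ∩ Set.Iio n) : ℝ) / n :=
  div_nonneg (Nat.cast_nonneg _) (Nat.cast_nonneg _)

private lemma card_inter_Iio_le (S : Set ℕ) (n : ℕ) :
    Nat.card ↥(S ∩ Set.Iio n) ≤ n := by
  have h := Nat.card_mono (Set.finite_Iio n)
    (Set.inter_subset_right (s := S) (t := Set.Iio n))
  simpa using h

private lemma densFun_le_one (S : Set ℕ) (n : ℕ) :
    (Nat.card ↥(S ∩ Set.Iio n) : ℝ) / n ≤ 1 := by
  rcases Nat.eq_zero_or_pos n with h | h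
  · simp [h]
  · rw [div_le_one (by exact_mod_cast h)]
    exact_mod_cast card_inter_Iio_le S n

private lemma densFun_mono {S T : Set ℕ} (h : S ⊆ T) (n : ℕ) :
    (Nat.card ↥(S ∩ Set.Iio n) : ℝ) / n ≤ (Nat.card ↥(T ∩ Set.Iio n) : ℝ) / n := by
  rcases Nat.eq_zero_or_pos n with h0 | h0
  · simp [h0]
  · apply div_le_div_of_nonneg_right _ (Nat.cast_nonneg n)
    exact_mod_cast Nat.card_mono ((Set.finite_Iio n).inter_of_right T)
      (Set.inter_subset_inter_left _ h)

private lemma hasDensity_zero_of_le (S : Set ℕ) (h : upperDensity S ≤ 0) :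
    HasDensity S 0 := by
  rw [HasDensity]
  refine tendsto_order.2 ⟨fun b hb => Eventually.of_forall fun n =>
    lt_of_lt_of_le hb (densFun_nonneg S n), fun b hb => ?_⟩
  have hbd : IsBoundedUnder (· ≤ ·) atTop
      (fun n => (Nat.card ↥(S ∩ Set.Iio n) : ℝ) / n) :=
    isBoundedUnder_of ⟨1, fun n => densFun_le_one S n⟩
  exact eventually_lt_of_limsup_lt (lt_of_le_of_lt h hb) hbd

private lemma hasDensity_zero_mono_s5 {S T : Set ℕ} (h : S ⊆ T) (hT : HasDensity T 0) :
    HasDensity S 0 :=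
  squeeze_zero (fun n => densFun_nonneg S n) (fun n => densFun_mono h n) hT

private lemma exists_block {M : ℕ → ℕ} (hM : StrictMono M) {b n : ℕ} (hb : M b ≤ n) :
    ∃ j, b ≤ j ∧ M j ≤ n ∧ n < M (j + 1) := by
  have hbn : b ≤ n := le_trans hM.le_apply hb
  refine ⟨Nat.findGreatest (fun j => M j ≤ n) n,
    Nat.le_findGreatest (P := fun j => M j ≤ n) hbn hb,
    Nat.findGreatest_spec (P := fun j => M j ≤ n) hbn hb, ?_⟩
  by_contra h
  push_neg at h
  exact Nat.findGreatest_is_greatest (Nat.lt_succ_self _)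
    (le_trans hM.le_apply h) h

/-- Lemma 1.9: if `A` has positive upper density, is not `q`-bounded, and has no
`q`-bounded subset of positive upper density, then there is a `q`-divergent
`B ⊆ A` with `d(A \ B) = 0`. -/
theorem lemma_suf2 (a : ℕ → ℕ) (ha : IsArithmeticSeq a)
    (A : Set ℕ) (hA : 0 < upperDensity A) (hub : ¬ QBounded a A)
    (hno : ¬ ∃ A' ⊆ A, 0 < upperDensity A' ∧ QBounded a A') :
    ∃ B ⊆ A, HasDensity (A \ B) 0 ∧ QDivergent a B := by
  classical
  set Ak : ℕ → Set ℕ := fun k => {n | n ∈ A ∧ a n / a (n - 1) ≤ k} with hAkdef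
  have hAk : ∀ k : ℕ, HasDensity (Ak k) 0 := by
    intro k
    apply hasDensity_zero_of_le
    by_contra h
    push_neg at h
    exact hno ⟨Ak k, fun n hn => hn.1, h, ⟨k, fun n hn => hn.2⟩⟩
  -- choose thresholds
  have hN : ∀ k : ℕ, ∃ N, ∀ n, N ≤ n →
      (Nat.card ↥(Ak k ∩ Set.Iio n) : ℝ) / n < 1 / (k + 1) := by
    intro k
    obtain ⟨N, hN⟩ := Metric.tendsto_atTop.1 (hAk k) (1 / (k + 1)) (by positivity)
    refine ⟨N, fun n hn => ?_⟩
    have := hN n hn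
    rwa [Real.dist_eq, sub_zero, abs_of_nonneg (densFun_nonneg _ _)] at this
  choose N hNspec using hN
  set M : ℕ → ℕ := fun k => (Finset.range (k + 1)).sup N + k with hMdef
  have hMmono : StrictMono M := by
    apply strictMono_nat_of_lt_succ
    intro k
    have : (Finset.range (k + 1)).sup N ≤ (Finset.range (k + 1 + 1)).sup N :=
      Finset.sup_mono (Finset.range_subset_range.2 (Nat.le_succ _))
    simp only [hMdef]
    omega
  have hNM : ∀ k, N k ≤ M k := fun k =>
    le_trans (Finset.le_sup (Finset.self_mem_range_succ k)) (Nat.le_add_right _ _)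
  set Bad : Set ℕ := {n | ∃ k, M k ≤ n ∧ n < M (k + 1) ∧ n ∈ Ak k} with hBaddef
  -- key: blockwise containment
  have hkey : ∀ j n, M j ≤ n → n < M (j + 1) → Bad ∩ Set.Iio n ⊆ Ak j ∩ Set.Iio n := by
    intro j n hjn hnj m hm
    obtain ⟨⟨i, him, hmi, hmA⟩, hmn⟩ := hm
    refine ⟨⟨hmA.1, ?_⟩, hmn⟩
    rcases le_or_gt i j with hij | hij
    · exact le_trans hmA.2 hij
    · exfalso
      have : M (j + 1) ≤ M i := hMmono.monotone hij
      have : M (j + 1) ≤ m := le_trans this him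
      have hmn' : m < n := hmn
      omega
  have hBadDens : HasDensity Bad 0 := by
    rw [HasDensity]
    rw [Metric.tendsto_atTop]
    intro ε hε
    obtain ⟨k, hk⟩ := exists_nat_one_div_lt hε
    refine ⟨M k, fun n hn => ?_⟩
    obtain ⟨j, hkj, hjn, hnj⟩ := exists_block hMmono hn
    have h1 : (Nat.card ↥(Bad ∩ Set.Iio n) : ℝ) / n
        ≤ (Nat.card ↥(Ak j ∩ Set.Iio n) : ℝ) / n := by
      rcases Nat.eq_zero_or_pos n with h0 | h0
      · simp [h0]
      · apply div_le_div_of_nonneg_right _ (Nat.cast_nonneg n)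
        exact_mod_cast Nat.card_mono ((Set.finite_Iio n).inter_of_right _)
          (hkey j n hjn hnj)
    have h2 : (Nat.card ↥(Ak j ∩ Set.Iio n) : ℝ) / n < 1 / (j + 1) :=
      hNspec j n (le_trans (hNM j) hjn)
    have h3 : (1 : ℝ) / (j + 1) ≤ 1 / (k + 1) := by
      apply one_div_le_one_div_of_le (by positivity)
      exact_mod_cast by omega
    rw [Real.dist_eq, sub_zero, abs_of_nonneg (densFun_nonneg _ _)]
    calc (Nat.card ↥(Bad ∩ Set.Iio n) : ℝ) / n
        ≤ (Nat.card ↥(Ak j ∩ Set.Iio n) : ℝ) / n := h1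
      _ < 1 / (j + 1) := h2
      _ ≤ 1 / (k + 1) := h3
      _ < ε := hk
  refine ⟨A \ Bad, Set.diff_subset, ?_, ?_⟩
  · exact hasDensity_zero_mono_s5 (fun n hn => by
      rcases hn with ⟨hnA, hnB⟩
      by_contra hBad
      exact hnB ⟨hnA, hBad⟩) hBadDens
  · rw [QDivergent, tendsto_atTop]
    intro b
    rw [eventually_inf_principal]
    filter_upwards [eventually_ge_atTop (M b)] with n hn hnB
    obtain ⟨j, hbj, hjn, hnj⟩ := exists_block hMmono hn
    by_contra h
    push_neg at h
    exact hnB.2 ⟨j, hjn, hnj, hnB.1, by omega⟩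
end
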